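/- Let m ≥ 1 and k ≥ 3 be integers, c_3 = 2^{m+4} + 2^{m+2} + 3, c_4 = 2^{m+3} + 2^{m+2} + 2, and N = c_3·2^{m+k+4} + c_4 (so N = 2n where n is the integer with binary form 101 0^m 11 0^k 11 0^m 1). Then ℓ(2^N − 1) ≤ N + 2m + k + 10. -/

import Mathlib

/-- An addition chain of length `r` for `n`, given by `a : ℕ → ℕ`. -/
def IsAdditionChain (r : ℕ) (a : ℕ → ℕ) (n : ℕ) : Prop :=
  a 0 = 1 ∧ a r = n ∧ (∀ k, k < r → a k < a (k + 1)) ∧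
    ∀ k, 1 ≤ k → k ≤ r → ∃ i j, i < k ∧ j < k ∧ a k = a i + a j

/-- Minimal length of an addition chain for `n`. -/
noncomputable def addLen (n : ℕ) : ℕ :=
  sInf {r | ∃ a : ℕ → ℕ, IsAdditionChain r a n}


inductive Gd : List ℕ → Prop
  | base : Gd [1]
  | step {l : List ℕ} {x y : ℕ} : Gd l → x ∈ l → y ∈ l → (∀ z ∈ l, z < x + y) →
      Gd ((x + y) :: l)

lemma Gd.ne_nil {l : List ℕ} (h : Gd l) : l ≠ [] := by cases h <;> simp

lemma Gd.pos {l : List ℕ} (h : Gd l) : ∀ z ∈ l, 0 < z := by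
  induction h with
  | base => intro z hz; simp at hz; omega
  | step h hx hy hb ih =>
    intro z hz
    rcases List.mem_cons.1 hz with rfl | hz
    · have := ih _ hx; omega
    · exact ih _ hz

lemma Gd.head_mem {l : List ℕ} (h : Gd l) : l.headI ∈ l := by
  cases h with
  | base => simp
  | step => simp

lemma Gd.le_headI {l : List ℕ} (h : Gd l) : ∀ z ∈ l, z ≤ l.headI := by
  cases h with
  | base => intro z hz; simp at hz ⊢; omega
  | step h hx hy hb =>
    intro z hz
    rcases List.mem_cons.1 hz with rfl | hz
    · exact le_refl _
    · have := hb z hz; exact Nat.le_of_lt this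

lemma Gd.sorted {l : List ℕ} (h : Gd l) : l.Pairwise (· > ·) := by
  induction h with
  | base => simp
  | step h hx hy hb ih => exact List.Pairwise.cons (fun z hz => hb z hz) ih

lemma Gd.last_one {l : List ℕ} (h : Gd l) : l.getD (l.length - 1) 0 = 1 := by
  induction h with
  | base => rfl
  | step h hx hy hb ih =>
    rename_i l x y
    have hne : l.length ≠ 0 := by simpa using h.ne_nil
    have e : ((x + y) :: l).length - 1 = (l.length - 1) + 1 := by simp; omega
    rw [e, List.getD_cons_succ]; exact ih

lemma Gd.decomp {l : List ℕ} (h : Gd l) : ∀ p, p + 1 < l.length →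
    ∃ q q', p < q ∧ q < l.length ∧ p < q' ∧ q' < l.length ∧
      l.getD p 0 = l.getD q 0 + l.getD q' 0 := by
  induction h with
  | base => intro p hp; simp at hp
  | step h hx hy hb ih =>
    rename_i l x y
    intro p hp
    match p with
    | 0 =>
      obtain ⟨i, hi, hix⟩ := List.mem_iff_getElem.1 hx
      obtain ⟨j, hj, hjy⟩ := List.mem_iff_getElem.1 hy
      refine ⟨i + 1, j + 1, by omega, by simp; omega, by omega, by simp; omega, ?_⟩
      rw [List.getD_cons_zero, List.getD_cons_succ, List.getD_cons_succ,
        List.getD_eq_getElem _ _ hi, List.getD_eq_getElem _ _ hj, hix, hjy]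
    | p + 1 =>
      have hp' : p + 1 < l.length := by simp at hp; omega
      obtain ⟨q, q', h1, h2, h3, h4, h5⟩ := ih p hp'
      exact ⟨q + 1, q' + 1, by omega, by simp; omega, by omega, by simp; omega,
        by simpa [List.getD_cons_succ] using h5⟩

lemma Gd.addLen_le {l : List ℕ} (h : Gd l) : addLen l.headI ≤ l.length - 1 := by
  set r := l.length - 1 with hr
  have hne : l.length ≠ 0 := by simpa using h.ne_nil
  have hlen : l.length = r + 1 := by omega
  have hd0 : l.getD 0 0 = l.headI := by
    cases l with
    | nil => exact absurd rfl h.ne_nil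
    | cons a t => rfl
  refine Nat.sInf_le ⟨fun i => l.getD (r - i) 0, ?_, ?_, ?_, ?_⟩
  · show l.getD (r - 0) 0 = 1
    simpa [hr] using h.last_one
  · show l.getD (r - r) 0 = l.headI
    simpa using hd0
  · intro i hi
    show l.getD (r - i) 0 < l.getD (r - (i + 1)) 0
    have h1 : r - (i + 1) < l.length := by omega
    have h2 : r - i < l.length := by omega
    rw [List.getD_eq_getElem _ _ h1, List.getD_eq_getElem _ _ h2]
    exact List.pairwise_iff_getElem.1 h.sorted _ _ h1 h2 (by omega)
  · intro t ht1 ht2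
    have hp : (r - t) + 1 < l.length := by omega
    obtain ⟨q, q', hq1, hq2, hq3, hq4, hq5⟩ := h.decomp (r - t) hp
    refine ⟨r - q, r - q', by omega, by omega, ?_⟩
    show l.getD (r - t) 0 = l.getD (r - (r - q)) 0 + l.getD (r - (r - q')) 0
    have e1 : r - (r - q) = q := by omega
    have e2 : r - (r - q') = q' := by omega
    rw [e1, e2]
    exact hq5

lemma gd_double {l : List ℕ} (h : Gd l) : Gd (2 * l.headI :: l) := by
  have hx := h.head_mem
  have hpos := h.pos _ hx
  have e : 2 * l.headI = l.headI + l.headI := by ring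
  rw [e]
  exact h.step hx hx (fun z hz => by have := h.le_headI z hz; omega)

lemma gd_doubles {l : List ℕ} (h : Gd l) (q : ℕ) :
    ∃ l', Gd l' ∧ l ⊆ l' ∧ l'.headI = l.headI * 2 ^ q ∧ l'.length = l.length + q := by
  induction q with
  | zero => exact ⟨l, h, List.Subset.refl l, by simp, rfl⟩
  | succ q ih =>
    obtain ⟨l', h', hsub, hh, hlen⟩ := ih
    refine ⟨2 * l'.headI :: l', gd_double h',
      List.Subset.trans hsub (List.subset_cons_self _ _), ?_, ?_⟩
    · show 2 * l'.headI = l.headI * 2 ^ (q + 1)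
      rw [hh, pow_succ]; ring
    · simp [hlen]; omega

lemma mers_aux (p q : ℕ) : (2 ^ p - 1) * 2 ^ q + (2 ^ q - 1) = 2 ^ (p + q) - 1 := by
  have h1 : 1 ≤ 2 ^ p := Nat.one_le_two_pow
  have h2 : 1 ≤ 2 ^ q := Nat.one_le_two_pow
  rw [pow_add]
  obtain ⟨a, ha⟩ := Nat.exists_eq_add_of_le h1
  obtain ⟨b, hb⟩ := Nat.exists_eq_add_of_le h2
  rw [ha, hb]
  simp [Nat.add_sub_cancel_left, Nat.mul_add, Nat.add_mul]
  omega

lemma mstep {l : List ℕ} (h : Gd l) (p q : ℕ) (hq : 1 ≤ q)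
    (hh : l.headI = 2 ^ p - 1) (hy : 2 ^ q - 1 ∈ l) :
    ∃ l', Gd l' ∧ l ⊆ l' ∧ l'.headI = 2 ^ (p + q) - 1 ∧
      l'.length = l.length + q + 1 := by
  obtain ⟨l', h', hsub, hh', hlen⟩ := gd_doubles h q
  have hx : l'.headI ∈ l' := h'.head_mem
  have hy' : 2 ^ q - 1 ∈ l' := hsub hy
  have h2q : 2 ≤ 2 ^ q := by
    calc (2:ℕ) = 2 ^ 1 := (pow_one 2).symm
    _ ≤ 2 ^ q := Nat.pow_le_pow_right (by norm_num) hq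
  have hypos : 0 < 2 ^ q - 1 := by omega
  refine ⟨(l'.headI + (2 ^ q - 1)) :: l',
    h'.step hx hy' (fun z hz => by have := h'.le_headI z hz; omega),
    List.Subset.trans hsub (List.subset_cons_self _ _), ?_, ?_⟩
  · show l'.headI + (2 ^ q - 1) = 2 ^ (p + q) - 1
    rw [hh', hh]; exact mers_aux p q
  · simp [hlen]

lemma phaseA (i : ℕ) : ∃ l, Gd l ∧ (1 : ℕ) ∈ l ∧
    l.headI = 2 ^ (2 ^ i) - 1 ∧ l.length = 2 ^ i + i := by
  induction i with
  | zero => exact ⟨[1], Gd.base, by simp, by norm_num, by norm_num⟩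
  | succ i ih =>
    obtain ⟨l, h, h1, hh, hlen⟩ := ih
    have hy : (2 : ℕ) ^ (2 ^ i) - 1 ∈ l := hh ▸ h.head_mem
    obtain ⟨l', h', hsub, hh', hlen'⟩ := mstep h (2 ^ i) (2 ^ i) Nat.one_le_two_pow hh hy
    have e : 2 ^ i + 2 ^ i = 2 ^ (i + 1) := by rw [pow_succ]; ring
    exact ⟨l', h', hsub h1, by rw [hh', e], by rw [hlen', hlen]; omega⟩

lemma phaseF {l : List ℕ} (s : ℕ) (h : Gd l) (hw : 2 ^ (3 * 2 ^ s + 2) - 1 ∈ l)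
    (hh : l.headI = 2 ^ (5 * 2 ^ s + 3) - 1) (hlen : l.length = 5 * 2 ^ s + s + 7) :
    ∀ j, ∃ l', Gd l' ∧ (2 ^ (3 * 2 ^ s + 2) - 1) ∈ l' ∧
      l'.headI = 2 ^ ((5 * 2 ^ s + 3) * 2 ^ j) - 1 ∧
      l'.length = (5 * 2 ^ s + 3) * 2 ^ j + s + j + 4 := by
  intro j
  induction j with
  | zero => exact ⟨l, h, hw, by rw [hh]; norm_num, by rw [hlen]; norm_num; omega⟩
  | succ j ih =>
    obtain ⟨l', h', hw', hh', hlen'⟩ := ih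
    have hy : (2 : ℕ) ^ ((5 * 2 ^ s + 3) * 2 ^ j) - 1 ∈ l' := hh' ▸ h'.head_mem
    have hq : 1 ≤ (5 * 2 ^ s + 3) * 2 ^ j := by
      have : 0 < (5 * 2 ^ s + 3) * 2 ^ j := by positivity
      omega
    obtain ⟨l'', h'', hsub, hh'', hlen''⟩ :=
      mstep h' ((5 * 2 ^ s + 3) * 2 ^ j) ((5 * 2 ^ s + 3) * 2 ^ j) hq hh' hy
    have e : (5 * 2 ^ s + 3) * 2 ^ j + (5 * 2 ^ s + 3) * 2 ^ j
        = (5 * 2 ^ s + 3) * 2 ^ (j + 1) := by rw [pow_succ]; ring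
    refine ⟨l'', h'', hsub hw', by rw [hh'', e], ?_⟩
    rw [hlen'', hlen', ← e]
    omega

theorem stmt18 (m k : ℕ) (hm : 1 ≤ m) (hk : 3 ≤ k) :
    addLen (2 ^ ((2 ^ (m + 4) + 2 ^ (m + 2) + 3) * 2 ^ (m + k + 4) +
        (2 ^ (m + 3) + 2 ^ (m + 2) + 2)) - 1) ≤
      ((2 ^ (m + 4) + 2 ^ (m + 2) + 3) * 2 ^ (m + k + 4) +
        (2 ^ (m + 3) + 2 ^ (m + 2) + 2)) + 2 * m + k + 10 := by
  have hA : 1 ≤ (2 : ℕ) ^ (m + k + 4) := Nat.one_le_two_pow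
  -- l1 : Mersenne of 2^s, s := m + k + 4
  obtain ⟨l1, h1, h1mem, hh1, hlen1⟩ := phaseA (m + k + 4)
  -- l2 : exponent 2^s + 1
  have hy1 : (2 : ℕ) ^ 1 - 1 ∈ l1 := by norm_num; exact h1mem
  obtain ⟨l2, h2, hsub2, hh2, hlen2⟩ := mstep h1 (2 ^ (m + k + 4)) 1 le_rfl hh1 hy1
  -- l3 : exponent 2*2^s + 1
  have hy2 : (2 : ℕ) ^ (2 ^ (m + k + 4)) - 1 ∈ l2 := hsub2 (hh1 ▸ h1.head_mem)
  obtain ⟨l3, h3, hsub3, hh3, hlen3⟩ :=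
    mstep h2 (2 ^ (m + k + 4) + 1) (2 ^ (m + k + 4)) Nat.one_le_two_pow hh2 hy2
  have hh3' : l3.headI = 2 ^ (2 * 2 ^ (m + k + 4) + 1) - 1 := by
    rw [hh3]; congr 2; omega
  -- l4 : exponent 3*2^s + 2
  have hy3 : (2 : ℕ) ^ (2 ^ (m + k + 4) + 1) - 1 ∈ l3 := hsub3 (hh2 ▸ h2.head_mem)
  obtain ⟨l4, h4, hsub4, hh4, hlen4⟩ :=
    mstep h3 (2 * 2 ^ (m + k + 4) + 1) (2 ^ (m + k + 4) + 1) (by omega) hh3' hy3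
  have hh4' : l4.headI = 2 ^ (3 * 2 ^ (m + k + 4) + 2) - 1 := by
    rw [hh4]; congr 2; omega
  -- l5 : exponent 5*2^s + 3
  have hy4 : (2 : ℕ) ^ (2 * 2 ^ (m + k + 4) + 1) - 1 ∈ l4 := hsub4 (hh3' ▸ h3.head_mem)
  obtain ⟨l5, h5, hsub5, hh5, hlen5⟩ :=
    mstep h4 (3 * 2 ^ (m + k + 4) + 2) (2 * 2 ^ (m + k + 4) + 1) (by omega) hh4' hy4
  have hh5' : l5.headI = 2 ^ (5 * 2 ^ (m + k + 4) + 3) - 1 := by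
    rw [hh5]; congr 2; omega
  have hw5 : (2 : ℕ) ^ (3 * 2 ^ (m + k + 4) + 2) - 1 ∈ l5 := hsub5 (hh4' ▸ h4.head_mem)
  have hlen5' : l5.length = 5 * 2 ^ (m + k + 4) + (m + k + 4) + 7 := by
    rw [hlen5, hlen4, hlen3, hlen2, hlen1]; omega
  -- l6 : exponent (5*2^s+3) * 2^(m+2)
  obtain ⟨l6, h6, hw6, hh6, hlen6⟩ := phaseF (m + k + 4) h5 hw5 hh5' hlen5' (m + 2)
  -- l7 : exponent (5*2^s+3) * 2^(m+2) + (3*2^s+2) = N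
  obtain ⟨l7, h7, hsub7, hh7, hlen7⟩ :=
    mstep h6 ((5 * 2 ^ (m + k + 4) + 3) * 2 ^ (m + 2)) (3 * 2 ^ (m + k + 4) + 2)
      (by omega) hh6 hw6
  have key := h7.addLen_le
  rw [hh7, hlen7, hlen6] at key
  have hN : (2 ^ (m + 4) + 2 ^ (m + 2) + 3) * 2 ^ (m + k + 4) +
      (2 ^ (m + 3) + 2 ^ (m + 2) + 2) =
      (5 * 2 ^ (m + k + 4) + 3) * 2 ^ (m + 2) + (3 * 2 ^ (m + k + 4) + 2) := by
    ring
  rw [hN]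
  refine key.trans ?_
  set P := (5 * 2 ^ (m + k + 4) + 3) * 2 ^ (m + 2) with hP
  omega
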